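/- Let P(x) = ∑_{m} a_m x^m be a homogeneous polynomial of degree r in n complex variables that is nonvanishing on H^n and not identically zero. Then there exists θ ∈ ℝ such that e^{−iθ}·a_m is a positive real number for every multi-index m with a_m ≠ 0. -/

import Mathlib

open MvPolynomial Polynomial

namespace StmtAux12

variable {n : ℕ}

lemma degSum {r : ℕ} {P : MvPolynomial (Fin n) ℂ} (h : P.IsHomogeneous r)
    {m : Fin n →₀ ℕ} (hm : P.coeff m ≠ 0) : ∑ i, m i = r := by
  have h1 : Finsupp.degree m = r := by
    rw [Finsupp.degree_eq_weight_one]; exact h hm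
  rw [← h1, Finsupp.degree]
  exact (Finset.sum_subset (Finset.subset_univ _)
    (by intro i _ hi; simpa using hi)).symm

lemma evalSmul {r : ℕ} {P : MvPolynomial (Fin n) ℂ} (h : P.IsHomogeneous r)
    (c : ℂ) (x : Fin n → ℂ) :
    eval (fun i => c * x i) P = c ^ r * eval x P := by
  rw [eval_eq', eval_eq', Finset.mul_sum]
  refine Finset.sum_congr rfl ?_
  intro d hd
  rw [MvPolynomial.mem_support_iff] at hd
  have : ∏ i, (c * x i) ^ d i = c ^ r * ∏ i, (x i) ^ d i := by
    rw [← degSum h hd]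
    rw [← Finset.prod_pow_eq_pow_sum]
    rw [← Finset.prod_mul_distrib]
    exact Finset.prod_congr rfl fun i _ => mul_pow _ _ _
  rw [this]; ring

lemma evalAeval {n : ℕ} (u : Fin n → Polynomial ℂ) (P : MvPolynomial (Fin n) ℂ) (t : ℂ) :
    (MvPolynomial.aeval u P).eval t = eval (fun i => (u i).eval t) P := by
  rw [MvPolynomial.aeval_def, Polynomial.algebraMap_eq]
  have h := MvPolynomial.eval₂_comp_left (Polynomial.evalRingHom t) Polynomial.C u P
  simp only [coe_evalRingHom] at h
  rw [h]
  rw [MvPolynomial.eval, MvPolynomial.eval₂Hom]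
  congr 1
  · ext a; simp

lemma sqrtHalf {z : ℂ} (hz : z ≠ 0) (ha : Complex.arg z ≠ Real.pi) :
    ∃ w : ℂ, w ^ 2 = z ∧ 0 < w.re ∧ 0 < (w⁻¹).re := by
  refine ⟨Complex.exp (Complex.log z / 2), ?_, ?_, ?_⟩
  · rw [sq, ← Complex.exp_add]
    rw [show Complex.log z / 2 + Complex.log z / 2 = Complex.log z by ring]
    exact Complex.exp_log hz
  · rw [Complex.exp_re]
    apply mul_pos (Real.exp_pos _)
    have h1 : (Complex.log z / 2).im = Complex.arg z / 2 := by
      rw [Complex.div_im]; simp [Complex.log_im, Complex.log_re]; ring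
    rw [h1]
    apply Real.cos_pos_of_mem_Ioo
    constructor
    · have := Complex.neg_pi_lt_arg z; linarith
    · have := Complex.arg_le_pi z
      have : Complex.arg z < Real.pi := lt_of_le_of_ne this ha
      linarith
  · rw [Complex.inv_re]
    apply div_pos
    · rw [Complex.exp_re]
      apply mul_pos (Real.exp_pos _)
      have h1 : (Complex.log z / 2).im = Complex.arg z / 2 := by
        rw [Complex.div_im]; simp [Complex.log_im, Complex.log_re]; ring
      rw [h1]
      apply Real.cos_pos_of_mem_Ioo
      constructor
      · have := Complex.neg_pi_lt_arg z; linarith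
      · have := Complex.arg_le_pi z
        have : Complex.arg z < Real.pi := lt_of_le_of_ne this ha
        linarith
    · rw [Complex.normSq_pos]
      exact Complex.exp_ne_zero _

lemma prodNonneg (S : Multiset ℂ) (h : ∀ z ∈ S, z.im = 0 ∧ 0 ≤ z.re) :
    ∃ a : ℝ, 0 ≤ a ∧ S.prod = a := by
  induction S using Multiset.induction with
  | empty => exact ⟨1, by norm_num⟩
  | cons z S ih =>
    obtain ⟨a, ha, hSa⟩ := ih (fun w hw => h w (Multiset.mem_cons_of_mem hw))
    obtain ⟨h1, h2⟩ := h z (Multiset.mem_cons_self _ _)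
    refine ⟨z.re * a, mul_nonneg h2 ha, ?_⟩
    rw [Multiset.prod_cons, hSa]
    have : z = (z.re : ℂ) := by
      apply Complex.ext <;> simp [h1]
    rw [this]
    simp only [Complex.ofReal_re]
    push_cast; ring

lemma halfA {r : ℕ} {P : MvPolynomial (Fin n) ℂ} (hhom : P.IsHomogeneous r)
    (hP : ∀ x : Fin n → ℂ, (∀ i, 0 < (x i).re) → eval x P ≠ 0)
    {α β : Fin n → ℝ} (hα : ∀ i, 0 < α i) (hβ : ∀ i, 0 < β i) :
    ∃ c : ℝ, 0 < c ∧ eval (fun i => (β i : ℂ)) P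
      = c * eval (fun i => (β i : ℂ) + (α i : ℂ)) P := by
  set q : Polynomial ℂ := MvPolynomial.aeval
    (fun i => Polynomial.C (β i : ℂ) + Polynomial.C (α i : ℂ) * Polynomial.X) P with hqdef
  have hqz : ∀ z : ℂ, q.eval z = eval (fun i => (β i : ℂ) + (α i : ℂ) * z) P := by
    intro z; rw [hqdef, evalAeval]; simp
  -- all roots are nonpositive reals
  have hroot : ∀ z : ℂ, q.eval z = 0 → z.im = 0 ∧ z.re ≤ 0 := by
    intro z hz
    by_contra hcon
    have hz0 : z ≠ 0 := by
      rintro rfl; exact hcon ⟨rfl, le_refl 0⟩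
    have harg : Complex.arg z ≠ Real.pi := by
      intro h
      rw [Complex.arg_eq_pi_iff] at h
      exact hcon ⟨h.2, le_of_lt h.1⟩
    obtain ⟨w, hw2, hwre, hwire⟩ := sqrtHalf hz0 harg
    have hwne : w ≠ 0 := by
      intro h; rw [h] at hwre; simp at hwre
    set y : Fin n → ℂ := fun i => (β i : ℂ) * w⁻¹ + (α i : ℂ) * w with hy
    have hyre : ∀ i, 0 < (y i).re := by
      intro i
      have h1 : ((β i : ℂ) * w⁻¹).re = β i * (w⁻¹).re := by
        simp [Complex.mul_re]
      have h2 : ((α i : ℂ) * w).re = α i * w.re := by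
        simp [Complex.mul_re]
      rw [hy]; simp only [Complex.add_re, h1, h2]
      have := mul_pos (hβ i) hwire
      have := mul_pos (hα i) hwre
      linarith
    have hkey : (fun i => (β i : ℂ) + (α i : ℂ) * z) = fun i => w * y i := by
      funext i
      rw [hy]
      field_simp
      rw [← hw2]
    have := hP y hyre
    rw [hqz, hkey, evalSmul hhom] at hz
    exact (mul_ne_zero (pow_ne_zero r hwne) this) hz
  -- q is nonzero at 0 and 1
  have hq0 : q.eval 0 = eval (fun i => (β i : ℂ)) P := by rw [hqz]; simp
  have hq1 : q.eval 1 = eval (fun i => (β i : ℂ) + (α i : ℂ)) P := by rw [hqz]; simp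
  have hPβ : eval (fun i => (β i : ℂ)) P ≠ 0 := hP _ (fun i => by simpa using hβ i)
  have hPβα : eval (fun i => (β i : ℂ) + (α i : ℂ)) P ≠ 0 := by
    apply hP
    intro i
    simp only [Complex.add_re, Complex.ofReal_re]
    have := hα i; have := hβ i; linarith
  have hqne : q ≠ 0 := by
    intro h; rw [h] at hq0; simp at hq0; exact hPβ hq0.symm
  -- factorization
  have hfac := (IsAlgClosed.splits q).eq_prod_roots
  have hev : ∀ t : ℂ, q.eval t
      = q.leadingCoeff * ((q.roots.map (fun ρ => t - ρ)).prod) := by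
    intro t
    conv_lhs => rw [hfac]
    rw [Polynomial.eval_mul, Polynomial.eval_C, Polynomial.eval_multiset_prod,
      Multiset.map_map]
    congr 2
    apply Multiset.map_congr rfl
    intro ρ _; simp
  have hmem : ∀ ρ ∈ q.roots, ρ.im = 0 ∧ ρ.re ≤ 0 := by
    intro ρ hρ
    exact hroot ρ (Polynomial.isRoot_of_mem_roots hρ)
  obtain ⟨a0, ha0, hA0⟩ := prodNonneg (q.roots.map (fun ρ => 0 - ρ)) (by
    intro zz hz
    obtain ⟨ρ, hρ, rfl⟩ := Multiset.mem_map.1 hz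
    obtain ⟨h1, h2⟩ := hmem ρ hρ
    constructor <;> simp [h1]
    linarith)
  obtain ⟨a1, ha1, hA1⟩ := prodNonneg (q.roots.map (fun ρ => 1 - ρ)) (by
    intro zz hz
    obtain ⟨ρ, hρ, rfl⟩ := Multiset.mem_map.1 hz
    obtain ⟨h1, h2⟩ := hmem ρ hρ
    constructor <;> simp [h1]
    linarith)
  have e0 : eval (fun i => (β i : ℂ)) P = q.leadingCoeff * a0 := by
    rw [← hq0, hev 0, hA0]
  have e1 : eval (fun i => (β i : ℂ) + (α i : ℂ)) P = q.leadingCoeff * a1 := by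
    rw [← hq1, hev 1, hA1]
  have ha0ne : a0 ≠ 0 := by
    intro h; rw [h] at e0; simp at e0; exact hPβ e0
  have ha1ne : a1 ≠ 0 := by
    intro h; rw [h] at e1; simp at e1; exact hPβα e1
  refine ⟨a0 / a1, ?_, ?_⟩
  · exact div_pos (lt_of_le_of_ne ha0 (Ne.symm ha0ne)) (lt_of_le_of_ne ha1 (Ne.symm ha1ne))
  · rw [e0, e1]
    have : (a1 : ℂ) ≠ 0 := by exact_mod_cast ha1ne
    push_cast
    field_simp

lemma ratio {r : ℕ} {P : MvPolynomial (Fin n) ℂ} (hhom : P.IsHomogeneous r)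
    (hP : ∀ x : Fin n → ℂ, (∀ i, 0 < (x i).re) → eval x P ≠ 0)
    {β δ : Fin n → ℝ} (hβ : ∀ i, 0 < β i) (hδ : ∀ i, 0 < δ i) :
    ∃ c : ℝ, 0 < c ∧ eval (fun i => (β i : ℂ)) P = c * eval (fun i => (δ i : ℂ)) P := by
  obtain ⟨c₁, hc₁, h₁⟩ := halfA hhom hP hδ hβ
  obtain ⟨c₂, hc₂, h₂⟩ := halfA hhom hP hβ hδ
  have hsym : (fun i => (δ i : ℂ) + (β i : ℂ)) = (fun i => (β i : ℂ) + (δ i : ℂ)) := by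
    funext i; ring
  rw [hsym] at h₂
  refine ⟨c₁ / c₂, div_pos hc₁ hc₂, ?_⟩
  rw [h₁, h₂]
  have : (c₂ : ℂ) ≠ 0 := by exact_mod_cast ne_of_gt hc₂
  push_cast
  field_simp

lemma coeff_pderiv' (j : Fin n) (P : MvPolynomial (Fin n) ℂ) (κ : Fin n →₀ ℕ) :
    (MvPolynomial.pderiv j P).coeff κ
      = (κ j + 1 : ℕ) * P.coeff (κ + Finsupp.single j 1) := by
  induction P using MvPolynomial.induction_on' with
  | monomial u a =>
    rw [MvPolynomial.pderiv_monomial, MvPolynomial.coeff_monomial,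
      MvPolynomial.coeff_monomial]
    by_cases hj : u j = 0
    · have hne : u ≠ κ + Finsupp.single j 1 := by
        intro h
        apply absurd hj
        rw [h]
        simp
      rw [if_neg hne]
      by_cases he : u - Finsupp.single j 1 = κ
      · rw [if_pos he, hj]; simp
      · rw [if_neg he]; simp
    · have hle : Finsupp.single j 1 ≤ u := by
        rw [Finsupp.single_le_iff]; omega
      by_cases he : u = κ + Finsupp.single j 1
      · have h2 : u - Finsupp.single j 1 = κ := by
          rw [he]; exact add_tsub_cancel_right _ _
        rw [if_pos he, if_pos h2, he]
        simp [Finsupp.add_apply, Finsupp.single_eq_same]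
        ring
      · have h2 : u - Finsupp.single j 1 ≠ κ := by
          intro h
          apply he
          rw [← h, tsub_add_cancel_of_le hle]
        rw [if_neg he, if_neg h2]
        simp
  | add p q hp hq =>
    rw [map_add, MvPolynomial.coeff_add, MvPolynomial.coeff_add, hp, hq]
    ring

lemma pderiv_homog {s : ℕ} {P : MvPolynomial (Fin n) ℂ}
    (h : P.IsHomogeneous (s + 1)) (j : Fin n) :
    (MvPolynomial.pderiv j P).IsHomogeneous s := by
  intro κ hκ
  rw [coeff_pderiv'] at hκ
  have h2 : P.coeff (κ + Finsupp.single j 1) ≠ 0 := by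
    intro h0; rw [h0] at hκ; simp at hκ
  have h3 := h h2
  rw [map_add] at h3
  have h4 : (Finsupp.weight 1) (Finsupp.single j 1) = 1 := by
    simp [Finsupp.weight_apply, Finsupp.sum_single_index]
  rw [h4] at h3
  omega

lemma chainRule (u : Fin n → Polynomial ℂ) (P : MvPolynomial (Fin n) ℂ) :
    Polynomial.derivative (MvPolynomial.aeval u P)
      = ∑ j, MvPolynomial.aeval u (MvPolynomial.pderiv j P) * Polynomial.derivative (u j) := by
  induction P using MvPolynomial.induction_on with
  | C a => simp
  | add p q hp hq =>
    rw [map_add, map_add, hp, hq, ← Finset.sum_add_distrib]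
    apply Finset.sum_congr rfl
    intro j _
    rw [map_add, map_add]
    ring
  | mul_X p i hp =>
    rw [map_mul, MvPolynomial.aeval_X, Polynomial.derivative_mul, hp]
    have key : ∀ j : Fin n, MvPolynomial.aeval u (MvPolynomial.pderiv j (p * MvPolynomial.X i))
        * Polynomial.derivative (u j)
        = MvPolynomial.aeval u (MvPolynomial.pderiv j p) * Polynomial.derivative (u j) * u i
          + MvPolynomial.aeval u p *
            (MvPolynomial.aeval u (MvPolynomial.pderiv j (MvPolynomial.X i : MvPolynomial (Fin n) ℂ))
              * Polynomial.derivative (u j)) := by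
      intro j
      rw [MvPolynomial.pderiv_mul, map_add, map_mul, map_mul, MvPolynomial.aeval_X]
      ring
    rw [Finset.sum_congr rfl (fun j _ => key j), Finset.sum_add_distrib, ← Finset.sum_mul,
      ← Finset.mul_sum]
    have h2 : ∑ j : Fin n, MvPolynomial.aeval u (MvPolynomial.pderiv j (MvPolynomial.X i : MvPolynomial (Fin n) ℂ))
        * Polynomial.derivative (u j) = Polynomial.derivative (u i) := by
      rw [Finset.sum_eq_single i]
      · rw [MvPolynomial.pderiv_X_self, map_one, one_mul]
      · intro b _ hb
        rw [MvPolynomial.pderiv_X_of_ne (Ne.symm hb), map_zero, zero_mul]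
      · intro h; exact absurd (Finset.mem_univ i) h
    rw [h2]

lemma coeffTop {r : ℕ} {P : MvPolynomial (Fin n) ℂ} (hhom : P.IsHomogeneous r)
    (x g : Fin n → ℂ) (hg : ∀ i, g i ≠ 0) :
    (MvPolynomial.aeval (fun i => Polynomial.C (g i) * Polynomial.X + Polynomial.C (x i)) P).coeff r
      = eval g P := by
  rw [MvPolynomial.aeval_def, Polynomial.algebraMap_eq, MvPolynomial.eval₂_eq', eval_eq']
  rw [Polynomial.finset_sum_coeff]
  apply Finset.sum_congr rfl
  intro d hd
  rw [MvPolynomial.mem_support_iff] at hd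
  have hds := degSum hhom hd
  set h := ∏ i, (Polynomial.C (g i) * Polynomial.X + Polynomial.C (x i)) ^ d i with hh
  have lne : ∀ i : Fin n, (Polynomial.C (g i) * Polynomial.X + Polynomial.C (x i)) ≠ 0 := by
    intro i h0
    have := Polynomial.natDegree_linear (hg i) (b := x i)
    rw [h0, Polynomial.natDegree_zero] at this
    exact absurd this.symm one_ne_zero
  have hpne : ∀ i : Fin n, (Polynomial.C (g i) * Polynomial.X + Polynomial.C (x i)) ^ d i ≠ 0 :=
    fun i => pow_ne_zero _ (lne i)
  have hdeg : h.natDegree = r := by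
    rw [hh, Polynomial.natDegree_prod _ _ (fun i _ => hpne i)]
    rw [← hds]
    apply Finset.sum_congr rfl
    intro i _
    rw [Polynomial.natDegree_pow, Polynomial.natDegree_linear (hg i), mul_one]
  have hlc : h.leadingCoeff = ∏ i, g i ^ d i := by
    rw [hh, Polynomial.leadingCoeff_prod]
    apply Finset.prod_congr rfl
    intro i _
    rw [Polynomial.leadingCoeff_pow, Polynomial.leadingCoeff_linear (hg i)]
  rw [Polynomial.coeff_C_mul, ← hdeg, Polynomial.coeff_natDegree, hlc]

lemma logDerivAux (S : Multiset ℂ) (hS : ∀ ρ ∈ S, ρ.re < 0) :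
    ((S.map (fun ρ => Polynomial.X - Polynomial.C ρ)).prod.eval 0 ≠ 0) ∧
    (S ≠ 0 → ∃ z : ℂ, 0 < z.re ∧
      (Polynomial.derivative (S.map (fun ρ => Polynomial.X - Polynomial.C ρ)).prod).eval 0
        = z * (S.map (fun ρ => Polynomial.X - Polynomial.C ρ)).prod.eval 0) := by
  induction S using Multiset.induction with
  | empty => simp
  | cons ρ S ih =>
    have hρ : ρ.re < 0 := hS ρ (Multiset.mem_cons_self _ _)
    have hρne : ρ ≠ 0 := by intro h; rw [h] at hρ; simp at hρ
    obtain ⟨ih1, ih2⟩ := ih (fun w hw => hS w (Multiset.mem_cons_of_mem hw))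
    have hprod : ((ρ ::ₘ S).map (fun ρ => Polynomial.X - Polynomial.C ρ)).prod
        = (Polynomial.X - Polynomial.C ρ) * (S.map (fun ρ => Polynomial.X - Polynomial.C ρ)).prod := by
      rw [Multiset.map_cons, Multiset.prod_cons]
    have hinv : 0 < ((-ρ)⁻¹).re := by
      rw [Complex.inv_re]
      apply div_pos
      · simp; linarith
      · rw [Complex.normSq_pos]; simpa using hρne
    constructor
    · rw [hprod, Polynomial.eval_mul]
      apply mul_ne_zero _ ih1
      simp [hρne]
    · intro _
      rw [hprod, Polynomial.derivative_mul, Polynomial.eval_add, Polynomial.eval_mul,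
        Polynomial.eval_mul]
      by_cases hS0 : S = 0
      · subst hS0
        refine ⟨(-ρ)⁻¹, hinv, ?_⟩
        simp
        field_simp
      · obtain ⟨z, hz, hzeq⟩ := ih2 hS0
        refine ⟨(-ρ)⁻¹ + z, by rw [Complex.add_re]; exact add_pos hinv hz, ?_⟩
        rw [hzeq]
        simp only [Polynomial.derivative_sub, Polynomial.derivative_X, Polynomial.derivative_C,
          Polynomial.eval_sub, Polynomial.eval_X, Polynomial.eval_C, sub_zero, Polynomial.eval_one]
        field_simp [hρne]
        simp only [Polynomial.eval_sub, Polynomial.eval_mul, Polynomial.eval_X, Polynomial.eval_C]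
        ring

lemma stepD {r : ℕ} {P : MvPolynomial (Fin n) ℂ} (hhom : P.IsHomogeneous (r + 1))
    (hP : ∀ x : Fin n → ℂ, (∀ i, 0 < (x i).re) → eval x P ≠ 0)
    {γ : Fin n → ℝ} (hγ : ∀ i, 0 < γ i)
    (x : Fin n → ℂ) (hx : ∀ i, 0 < (x i).re) :
    eval x (∑ j, MvPolynomial.C (γ j : ℂ) * MvPolynomial.pderiv j P) ≠ 0 := by
  set u : Fin n → Polynomial ℂ :=
    fun i => Polynomial.C ((γ i : ℂ)) * Polynomial.X + Polynomial.C (x i) with hu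
  set f := MvPolynomial.aeval u P with hf
  have hfe : ∀ t : ℂ, f.eval t = eval (fun i => (γ i : ℂ) * t + x i) P := by
    intro t; rw [hf, evalAeval]; simp [hu]
  have hf0 : f.eval 0 = eval x P := by
    rw [hfe]
    have : (fun i => (γ i : ℂ) * 0 + x i) = x := by funext i; simp
    rw [this]
  have hf0ne : f.eval 0 ≠ 0 := by rw [hf0]; exact hP x hx
  have hfne : f ≠ 0 := by intro h; rw [h] at hf0ne; simp at hf0ne
  have hγc : ∀ i, ((γ i : ℂ)) ≠ 0 := by
    intro i
    simpa using ne_of_gt (hγ i)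
  have hcoeff : f.coeff (r + 1) = eval (fun i => (γ i : ℂ)) P := coeffTop hhom x _ hγc
  have hPγ : eval (fun i => (γ i : ℂ)) P ≠ 0 := hP _ (fun i => by simpa using hγ i)
  have hdeg : 1 ≤ f.natDegree := by
    have := Polynomial.le_natDegree_of_ne_zero (by rw [hcoeff]; exact hPγ)
    omega
  have hroots : ∀ ρ ∈ f.roots, ρ.re < 0 := by
    intro ρ hρ
    have hev := Polynomial.isRoot_of_mem_roots hρ
    by_contra hcon
    push_neg at hcon
    apply hP (fun i => (γ i : ℂ) * ρ + x i) (fun i => by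
      simp only [Complex.add_re, Complex.mul_re, Complex.ofReal_re, Complex.ofReal_im]
      have h1 := mul_nonneg (le_of_lt (hγ i)) hcon
      have := hx i
      simp only [zero_mul, sub_zero]
      linarith)
    rw [← hfe]
    exact hev
  have hcard : f.roots ≠ 0 := by
    have hsp := (Polynomial.splits_iff_card_roots).1 (IsAlgClosed.splits f)
    intro h
    rw [h] at hsp
    simp at hsp
    omega
  have hfac := (IsAlgClosed.splits f).eq_prod_roots
  obtain ⟨hG0, hGd⟩ := logDerivAux f.roots hroots
  obtain ⟨z, hzre, hzeq⟩ := hGd hcard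
  have hzne : z ≠ 0 := by intro h; rw [h] at hzre; simp at hzre
  have hlcne : f.leadingCoeff ≠ 0 := Polynomial.leadingCoeff_ne_zero.2 hfne
  have hfd : f.derivative.eval 0 ≠ 0 := by
    conv_lhs => rw [hfac]
    rw [Polynomial.derivative_C_mul, Polynomial.eval_mul, Polynomial.eval_C, hzeq]
    exact mul_ne_zero hlcne (mul_ne_zero hzne hG0)
  -- now identify with the sum of partial derivatives
  have hchain := chainRule u P
  have hud : ∀ j, Polynomial.derivative (u j) = Polynomial.C ((γ j : ℂ)) := by
    intro j; simp [hu]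
  have hfd2 : f.derivative.eval 0
      = ∑ j, (γ j : ℂ) * eval x (MvPolynomial.pderiv j P) := by
    rw [hf, hchain]
    rw [Polynomial.eval_finset_sum]
    apply Finset.sum_congr rfl
    intro j _
    rw [Polynomial.eval_mul, hud j, Polynomial.eval_C, evalAeval]
    rw [mul_comm]
    have : (fun i => Polynomial.eval 0 (u i)) = x := by funext i; simp [hu]
    rw [this]
  intro hcon
  apply hfd
  rw [hfd2, ← hcon]
  rw [map_sum]
  apply Finset.sum_congr rfl
  intro j _
  rw [map_mul, MvPolynomial.eval_C]

lemma eulerPoint {s : ℕ} {P : MvPolynomial (Fin n) ℂ} (hhom : P.IsHomogeneous (s + 1))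
    (γ : Fin n → ℂ) :
    MvPolynomial.eval γ (∑ j, MvPolynomial.C (γ j) * MvPolynomial.pderiv j P)
      = ((s : ℂ) + 1) * MvPolynomial.eval γ P := by
  set u : Fin n → Polynomial ℂ :=
    fun i => Polynomial.C (γ i) * Polynomial.X + Polynomial.C (γ i) with hu
  set f := MvPolynomial.aeval u P with hf
  have h1 : f = (Polynomial.X + 1) ^ (s + 1) * Polynomial.C (MvPolynomial.eval γ P) := by
    apply Polynomial.funext
    intro t
    rw [hf, evalAeval]
    have hx : (fun i => (u i).eval t) = fun i => (t + 1) * γ i := by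
      funext i; simp [hu]; ring
    rw [hx, evalSmul hhom]
    simp
  have h3 : f.derivative.eval 0 = MvPolynomial.eval γ (∑ j, MvPolynomial.C (γ j) * MvPolynomial.pderiv j P) := by
    rw [hf, chainRule, Polynomial.eval_finset_sum, map_sum]
    apply Finset.sum_congr rfl
    intro j _
    have hud : Polynomial.derivative (u j) = Polynomial.C (γ j) := by simp [hu]
    rw [Polynomial.eval_mul, hud, Polynomial.eval_C, evalAeval, map_mul, MvPolynomial.eval_C]
    have : (fun i => Polynomial.eval 0 (u i)) = γ := by funext i; simp [hu]
    rw [this, mul_comm]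
  have h4 : f.derivative.eval 0 = ((s : ℂ) + 1) * MvPolynomial.eval γ P := by
    rw [h1, Polynomial.derivative_mul, Polynomial.derivative_C, Polynomial.derivative_pow]
    simp
  rw [← h3, h4]

lemma key : ∀ (r : ℕ) (P : MvPolynomial (Fin n) ℂ), P.IsHomogeneous r →
    (∀ x : Fin n → ℂ, (∀ i, 0 < (x i).re) → eval x P ≠ 0) →
    (∀ α : Fin n → ℝ, (∀ i, 0 < α i) → ∃ c : ℝ, 0 < c ∧ eval (fun i => (α i : ℂ)) P = c) →
    ∀ m : Fin n →₀ ℕ, ∃ c : ℝ, 0 ≤ c ∧ P.coeff m = c := by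
  intro r
  induction r with
  | zero =>
    intro P hhom hP hpos m
    by_cases hm : P.coeff m = 0
    · exact ⟨0, le_refl 0, by simp [hm]⟩
    have hm0 : m = 0 := by
      have := degSum hhom hm
      ext i
      have h1 : m i ≤ ∑ i, m i := Finset.single_le_sum (fun i _ => Nat.zero_le _) (Finset.mem_univ i)
      simp only [this] at h1
      simpa using Nat.le_zero.1 h1
    obtain ⟨c, hc, hceq⟩ := hpos (fun _ => 1) (fun _ => one_pos)
    have hsupp : P.support ⊆ {0} := by
      intro d hd
      rw [MvPolynomial.mem_support_iff] at hd
      have := degSum hhom hd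
      simp only [Finset.mem_singleton]
      ext i
      have h1 : d i ≤ ∑ i, d i := Finset.single_le_sum (fun i _ => Nat.zero_le _) (Finset.mem_univ i)
      simp only [this] at h1
      simpa using Nat.le_zero.1 h1
    have heval : eval (fun _ => (1 : ℂ)) P = P.coeff 0 := by
      rw [eval_eq']
      have h2 : ∀ d ∈ P.support, P.coeff d * ∏ i, (1 : ℂ) ^ d i = P.coeff d := by
        intro d _; simp
      rw [Finset.sum_congr rfl h2]
      rw [Finset.sum_subset hsupp]
      · simp
      · intro x _ hx
        rwa [← MvPolynomial.notMem_support_iff]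
    have hone : (fun i : Fin n => ((1 : ℝ) : ℂ)) = (fun _ : Fin n => (1 : ℂ)) := by
      funext i; norm_num
    rw [hone] at hceq
    rw [hm0, ← heval, hceq]
    exact ⟨c, le_of_lt hc, rfl⟩
  | succ s ih =>
    intro P hhom hP hpos m
    by_cases hm : P.coeff m = 0
    · exact ⟨0, le_refl 0, by simp [hm]⟩
    have hdm := degSum hhom hm
    have hj : ∃ j, m j ≠ 0 := by
      by_contra hcon
      push_neg at hcon
      rw [Finset.sum_congr rfl (fun i _ => hcon i)] at hdm
      simp at hdm
    obtain ⟨j₀, hj₀⟩ := hj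
    set κ := m - Finsupp.single j₀ 1 with hκ
    have hle : Finsupp.single j₀ 1 ≤ m := by rw [Finsupp.single_le_iff]; omega
    have hmκ : m = κ + Finsupp.single j₀ 1 := by
      rw [hκ, tsub_add_cancel_of_le hle]
    -- for each positive γ, the derivative polynomial has nonneg real coeffs
    have hQ : ∀ γ : Fin n → ℝ, (∀ i, 0 < γ i) →
        ∀ κ' : Fin n →₀ ℕ, ∃ c : ℝ, 0 ≤ c ∧
          (∑ j, MvPolynomial.C ((γ j : ℂ)) * MvPolynomial.pderiv j P).coeff κ' = (c : ℂ) := by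
      intro γ hγ
      set Q := ∑ j, MvPolynomial.C ((γ j : ℂ)) * MvPolynomial.pderiv j P with hQdef
      have hQhom : Q.IsHomogeneous s := by
        rw [hQdef]
        apply MvPolynomial.IsHomogeneous.sum
        intro j _
        exact (pderiv_homog hhom j).C_mul _
      have hQP : ∀ x : Fin n → ℂ, (∀ i, 0 < (x i).re) → eval x Q ≠ 0 := by
        intro x hx
        exact stepD hhom hP hγ x hx
      have hQpos : ∀ α : Fin n → ℝ, (∀ i, 0 < α i) →
          ∃ c : ℝ, 0 < c ∧ eval (fun i => (α i : ℂ)) Q = c := by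
        intro α hα
        obtain ⟨c, hc, hceq⟩ := ratio hQhom hQP hα hγ
        obtain ⟨cp, hcp, hcpeq⟩ := hpos γ hγ
        have hQγ : eval (fun i => (γ i : ℂ)) Q = ((s : ℂ) + 1) * eval (fun i => (γ i : ℂ)) P := by
          rw [hQdef]
          exact eulerPoint hhom _
        refine ⟨c * ((s : ℝ) + 1) * cp, by positivity, ?_⟩
        rw [hceq, hQγ, hcpeq]
        push_cast
        ring
      exact ih Q hQhom hQP hQpos
    -- extract the coefficient
    set cf : Fin n → ℂ := fun j => ((κ j + 1 : ℕ) : ℂ) * P.coeff (κ + Finsupp.single j 1) with hcf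
    have hsum : ∀ γ : Fin n → ℝ, (∀ i, 0 < γ i) →
        ∃ c : ℝ, 0 ≤ c ∧ ∑ j, (γ j : ℂ) * cf j = c := by
      intro γ hγ
      obtain ⟨c, hc, hceq⟩ := hQ γ hγ κ
      refine ⟨c, hc, ?_⟩
      rw [← hceq]
      rw [MvPolynomial.coeff_sum]
      apply Finset.sum_congr rfl
      intro j _
      rw [MvPolynomial.coeff_C_mul, coeff_pderiv', hcf]
    obtain ⟨a, ha, haeq⟩ := hsum (fun _ => 1) (fun _ => one_pos)
    simp only [Complex.ofReal_one, one_mul] at haeq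
    have hεsum : ∀ ε : ℝ, 0 < ε → ∃ b : ℝ, 0 ≤ b ∧ cf j₀ = (b : ℂ) - ε * a := by
      intro ε hε
      obtain ⟨b, hb, hbeq⟩ := hsum (fun i => ε + (if i = j₀ then 1 else 0))
        (fun i => by positivity)
      refine ⟨b, hb, ?_⟩
      have hdelta : ∀ j : Fin n, ((ε + (if j = j₀ then 1 else 0) : ℝ) : ℂ) * cf j
          = (ε : ℂ) * cf j + (if j = j₀ then cf j else 0) := by
        intro j
        by_cases hjj : j = j₀ <;> simp [hjj] <;> push_cast <;> ring
      have hsplit : ∑ j, ((ε + (if j = j₀ then 1 else 0) : ℝ) : ℂ) * cf j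
          = (ε : ℂ) * (∑ j, cf j) + cf j₀ := by
        rw [Finset.sum_congr rfl (fun j _ => hdelta j), Finset.sum_add_distrib,
          ← Finset.mul_sum]
        congr 1
        rw [Finset.sum_ite_eq' Finset.univ j₀ cf]
        simp
      rw [hsplit, haeq] at hbeq
      have : cf j₀ = (b : ℂ) - (ε : ℂ) * (a : ℂ) := by
        rw [← hbeq]; ring
      rw [this]
    -- cf j₀ is a nonneg real
    obtain ⟨b1, hb1, hb1eq⟩ := hεsum 1 one_pos
    have hcft : cf j₀ = ((b1 - a : ℝ) : ℂ) := by
      rw [hb1eq]; push_cast; ring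
    have htnonneg : 0 ≤ b1 - a := by
      have hkey : ∀ δ : ℝ, 0 < δ → 0 ≤ (b1 - a) + δ := by
        intro δ hδ
        rcases eq_or_lt_of_le ha with haz | hap
        · obtain ⟨b, hb, hbeq⟩ := hεsum 1 one_pos
          rw [hcft] at hbeq
          have h5 : b1 - a = b - 1 * a := by exact_mod_cast hbeq
          rw [h5, ← haz]; linarith
        · obtain ⟨b, hb, hbeq⟩ := hεsum (δ / a) (div_pos hδ hap)
          rw [hcft] at hbeq
          have h5 : b1 - a = b - δ / a * a := by exact_mod_cast hbeq
          have h6 : δ / a * a = δ := div_mul_cancel₀ δ (ne_of_gt hap)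
          rw [h5, h6]; linarith
      by_contra hcon
      push_neg at hcon
      have := hkey (-(b1 - a) / 2) (by linarith)
      linarith
    -- conclude
    have hcfj : ((m j₀ : ℕ) : ℂ) * P.coeff m = ((b1 - a : ℝ) : ℂ) := by
      have h8 : cf j₀ = ((m j₀ : ℕ) : ℂ) * P.coeff m := by
        rw [hcf]
        simp only []
        rw [hmκ]
        simp only [Finsupp.add_apply, Finsupp.single_eq_same]
      rw [← h8, hcft]
    have hmj₀c : ((m j₀ : ℕ) : ℂ) ≠ 0 := Nat.cast_ne_zero.2 hj₀
    refine ⟨(b1 - a) / (m j₀ : ℕ), div_nonneg htnonneg (Nat.cast_nonneg _), ?_⟩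
    have hmj₀r : ((m j₀ : ℕ) : ℝ) ≠ 0 := Nat.cast_ne_zero.2 hj₀
    rw [Complex.ofReal_div]
    rw [eq_div_iff (by exact_mod_cast hmj₀c)]
    push_cast
    push_cast at hcfj
    linear_combination hcfj

end StmtAux12

open StmtAux12 in
theorem stmt12 {n r : ℕ} (P : MvPolynomial (Fin n) ℂ) (hhom : P.IsHomogeneous r)
    (hne : P ≠ 0)
    (hP : ∀ x : Fin n → ℂ, (∀ i, 0 < (x i).re) → MvPolynomial.eval x P ≠ 0) :
    ∃ θ : ℝ, ∀ m ∈ P.support, ∃ c : ℝ, 0 < c ∧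
      P.coeff m = Complex.exp (θ * Complex.I) * (c : ℂ) := by
  set w := MvPolynomial.eval (fun _ : Fin n => (1 : ℂ)) P with hw
  have hwne : w ≠ 0 := hP _ (fun i => by norm_num)
  have hwabs : (0:ℝ) < ‖w‖ := by
    simpa using norm_pos_iff.2 hwne
  set P₂ := MvPolynomial.C (w⁻¹ * (‖w‖ : ℂ)) * P with hP₂
  have hfac_ne : w⁻¹ * (‖w‖ : ℂ) ≠ 0 :=
    mul_ne_zero (inv_ne_zero hwne) (by exact_mod_cast ne_of_gt hwabs)
  have hhom₂ : P₂.IsHomogeneous r := hhom.C_mul _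
  have hP₂P : ∀ x : Fin n → ℂ, (∀ i, 0 < (x i).re) → eval x P₂ ≠ 0 := by
    intro x hx
    rw [hP₂, map_mul, MvPolynomial.eval_C]
    exact mul_ne_zero hfac_ne (hP x hx)
  have hpos₂ : ∀ α : Fin n → ℝ, (∀ i, 0 < α i) →
      ∃ c : ℝ, 0 < c ∧ eval (fun i => (α i : ℂ)) P₂ = c := by
    intro α hα
    obtain ⟨c, hc, hceq⟩ := ratio hhom hP hα (fun i => one_pos)
    have hone : (fun i : Fin n => ((1:ℝ) : ℂ)) = (fun _ : Fin n => (1:ℂ)) := by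
      funext i; norm_num
    rw [hone, ← hw] at hceq
    refine ⟨c * ‖w‖, mul_pos hc hwabs, ?_⟩
    rw [hP₂, map_mul, MvPolynomial.eval_C, hceq]
    push_cast
    field_simp
  have hkey := key r P₂ hhom₂ hP₂P hpos₂
  refine ⟨w.arg, ?_⟩
  intro m hm
  rw [MvPolynomial.mem_support_iff] at hm
  obtain ⟨c, hc, hceq⟩ := hkey m
  have hc₂ : P₂.coeff m = w⁻¹ * (‖w‖ : ℂ) * P.coeff m := by
    rw [hP₂, MvPolynomial.coeff_C_mul]
  have hcne : c ≠ 0 := by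
    intro h
    rw [h] at hceq
    rw [hc₂] at hceq
    simp only [Complex.ofReal_zero] at hceq
    exact hm ((mul_eq_zero.1 hceq).resolve_left hfac_ne)
  refine ⟨c, lt_of_le_of_ne hc (Ne.symm hcne), ?_⟩
  have habsne : ((‖w‖ : ℝ) : ℂ) ≠ 0 := by exact_mod_cast ne_of_gt hwabs
  have hexp : Complex.exp ((w.arg : ℂ) * Complex.I) = w / (‖w‖ : ℂ) := by
    rw [eq_div_iff habsne, mul_comm]
    exact Complex.norm_mul_exp_arg_mul_I w
  rw [hexp]
  rw [hc₂] at hceq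
  field_simp [hwne, habsne] at hceq ⊢
  linear_combination hceq
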